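/- Let H be a Hopf algebra over a field k and let c be a central element of H satisfying: (i) for every finite-dimensional simple left H-module V, c acts as zero on V if and only if V is isomorphic to the trivial module; and (ii) every finite-dimensional left H-module E containing a submodule W such that both W and E/W are isomorphic to the trivial module decomposes as an internal direct sum of W and another submodule. If V is a finite-dimensional left H-module and W ⊆ V is a simple submodule such that V/W is isomorphic to the trivial module, then there exists a submodule W' ⊆ V with W ∩ W' = 0 and W + W' = V. -/

import Mathlib

universe u

/-- `V` is isomorphic to the trivial `H`-module, i.e. to `k` with action `h • x = ε(h) x`. -/
def IsTrivialRep (k H : Type*) (V : Type*) [Field k] [Ring H] [HopfAlgebra k H]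
    [AddCommGroup V] [Module k V] [Module H V] : Prop :=
  ∃ e : V ≃ₗ[k] k, ∀ (h : H) (v : V), e (h • v) = Coalgebra.counit (R := k) h * e v

lemma isSimple_of_trivialRep (k H : Type u) (M : Type u) [Field k] [Ring H] [HopfAlgebra k H]
    [AddCommGroup M] [Module k M] [Module H M] [IsScalarTower k H M]
    (h : IsTrivialRep k H M) : IsSimpleModule H M := by
  obtain ⟨e, -⟩ := h
  have hfr : Module.finrank k M = 1 := by
    rw [e.finrank_eq, Module.finrank_self]
  haveI : Nontrivial M := e.toEquiv.nontrivial
  have hk : IsSimpleModule k M := isSimpleModule_iff_finrank_eq_one.mpr hfr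
  rw [isSimpleModule_iff]
  constructor
  intro p
  rcases hk.eq_bot_or_eq_top (p.restrictScalars k) with hp | hp
  · exact Or.inl ((Submodule.restrictScalars_eq_bot_iff k H M).mp hp)
  · exact Or.inr ((Submodule.restrictScalars_eq_top_iff k H M).mp hp)

/-- under the Casimir hypotheses, a simple submodule `W` of a finite-dimensional
module `V` with trivial quotient `V ⧸ W` has a complement. -/
theorem complement_of_simple_sub_trivial_quot (k H : Type u) [Field k] [Ring H]
    [HopfAlgebra k H] (c : H) (hc : ∀ h : H, c * h = h * c)
    (hCasimir : ∀ (V : Type u) [AddCommGroup V] [Module k V] [Module H V]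
      [IsScalarTower k H V] [FiniteDimensional k V] [IsSimpleModule H V],
      (∀ v : V, c • v = 0) ↔ IsTrivialRep k H V)
    (hExt : ∀ (E : Type u) [AddCommGroup E] [Module k E] [Module H E]
      [IsScalarTower k H E] [FiniteDimensional k E] (W : Submodule H E),
      IsTrivialRep k H W → IsTrivialRep k H (E ⧸ W) →
      ∃ W' : Submodule H E, W ⊓ W' = ⊥ ∧ W ⊔ W' = ⊤)
    (V : Type u) [AddCommGroup V] [Module k V] [Module H V] [IsScalarTower k H V]
    [FiniteDimensional k V] (W : Submodule H V)
    (hW : IsSimpleModule H W) (hquot : IsTrivialRep k H (V ⧸ W)) :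
    ∃ W' : Submodule H V, W ⊓ W' = ⊥ ∧ W ⊔ W' = ⊤ := by
  classical
  by_cases hTriv : IsTrivialRep k H ↥W
  · exact hExt V W hTriv hquot
  · -- instances
    haveI : FiniteDimensional k ↥W :=
      FiniteDimensional.of_injective (W.subtype.restrictScalars k) W.injective_subtype
    haveI : FiniteDimensional k (V ⧸ W) :=
      Module.Finite.of_surjective (W.mkQ.restrictScalars k) (Submodule.mkQ_surjective W)
    haveI hQsimple : IsSimpleModule H (V ⧸ W) := isSimple_of_trivialRep k H _ hquot
    -- c acts as 0 on V ⧸ W, hence c • v ∈ W for all v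
    have hcW : ∀ v : V, c • v ∈ W := by
      intro v
      have h0 : c • (Submodule.Quotient.mk v : V ⧸ W) = 0 :=
        (hCasimir (V ⧸ W)).mpr hquot _
      rw [← Submodule.Quotient.mk_smul] at h0
      exact (Submodule.Quotient.mk_eq_zero W).mp h0
    -- c does not act as 0 on W
    have hnt : ¬ ∀ w : ↥W, c • w = 0 := fun h => hTriv ((hCasimir ↥W).mp h)
    -- the H-linear map v ↦ c • v
    let φ : V →ₗ[H] V :=
      { toFun := fun v => c • v
        map_add' := fun x y => smul_add c x y
        map_smul' := fun h v => by
          simp only [RingHom.id_apply, smul_smul, hc] }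
    refine ⟨LinearMap.ker φ, ?_, ?_⟩
    · -- intersection is ⊥
      rcases hW.eq_bot_or_eq_top (Submodule.comap W.subtype (LinearMap.ker φ)) with hp | hp
      · rw [eq_bot_iff]
        intro x hx
        rw [Submodule.mem_inf] at hx
        have : (⟨x, hx.1⟩ : ↥W) ∈ Submodule.comap W.subtype (LinearMap.ker φ) := hx.2
        rw [hp, Submodule.mem_bot] at this
        simpa using congrArg (Subtype.val) this
      · exfalso
        apply hnt
        intro w
        have hw : (w : V) ∈ LinearMap.ker φ := by
          have : w ∈ Submodule.comap W.subtype (LinearMap.ker φ) := hp ▸ Submodule.mem_top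
          exact this
        have : c • (w : V) = 0 := hw
        exact Subtype.ext (by simpa using this)
    · -- sum is ⊤
      rcases hW.eq_bot_or_eq_top (Submodule.comap W.subtype (LinearMap.ker φ)) with hp | hp
      · -- from the previous case we know W ⊓ ker φ = ⊥; compute dimensions
        have hdis : W ⊓ LinearMap.ker φ = ⊥ := by
          rw [eq_bot_iff]
          intro x hx
          rw [Submodule.mem_inf] at hx
          have : (⟨x, hx.1⟩ : ↥W) ∈ Submodule.comap W.subtype (LinearMap.ker φ) := hx.2
          rw [hp, Submodule.mem_bot] at this
          simpa using congrArg (Subtype.val) this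
        set φk : V →ₗ[k] V := φ.restrictScalars k with hφk
        have hker : LinearMap.ker φk = (LinearMap.ker φ).restrictScalars k := by
          ext x; simp [hφk]
        have hrange : LinearMap.range φk ≤ W.restrictScalars k := by
          rintro x ⟨v, rfl⟩
          exact hcW v
        have hdisk : (W.restrictScalars k) ⊓ ((LinearMap.ker φ).restrictScalars k) = ⊥ := by
          rw [eq_bot_iff]
          intro x hx
          rw [Submodule.mem_inf] at hx
          have : x ∈ W ⊓ LinearMap.ker φ := ⟨hx.1, hx.2⟩
          rw [hdis, Submodule.mem_bot] at this
          simpa using this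
        have hdim : Module.finrank k
            ((W.restrictScalars k) ⊔ ((LinearMap.ker φ).restrictScalars k) : Submodule k V)
            = Module.finrank k V := by
          have h1 := Submodule.finrank_sup_add_finrank_inf_eq
            (W.restrictScalars k) ((LinearMap.ker φ).restrictScalars k)
          rw [hdisk] at h1
          rw [finrank_bot, add_zero] at h1
          have h2 := LinearMap.finrank_range_add_finrank_ker φk
          have h3 : Module.finrank k (LinearMap.range φk) ≤
              Module.finrank k (W.restrictScalars k) :=
            Submodule.finrank_mono hrange
          rw [hker] at h2
          have h4 : Module.finrank k V ≤
              Module.finrank k (W.restrictScalars k) +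
              Module.finrank k ((LinearMap.ker φ).restrictScalars k) := by
            omega
          have h5 := Submodule.finrank_le
            ((W.restrictScalars k) ⊔ ((LinearMap.ker φ).restrictScalars k) : Submodule k V)
          omega
        have htopk : (W.restrictScalars k) ⊔ ((LinearMap.ker φ).restrictScalars k) = ⊤ :=
          Submodule.eq_top_of_finrank_eq hdim
        rw [← Submodule.restrictScalars_eq_top_iff k H V, eq_top_iff, ← htopk]
        apply sup_le
        · exact fun x hx => Submodule.mem_sup_left hx
        · exact fun x hx => Submodule.mem_sup_right hx
      · -- W ≤ ker φ contradicts hnt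
        exfalso
        apply hnt
        intro w
        have hw : (w : V) ∈ LinearMap.ker φ := by
          have : w ∈ Submodule.comap W.subtype (LinearMap.ker φ) := hp ▸ Submodule.mem_top
          exact this
        have : c • (w : V) = 0 := hw
        exact Subtype.ext (by simpa using this)
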